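/- Let X be a nonempty set and let A be a unital complex subalgebra of the algebra of all bounded functions X → ℂ which is closed under pointwise complex conjugation and has the property that for every real-valued Φ ∈ A and every real number c > sup_{x∈X} |Φ(x)|, the function x ↦ √(c − Φ(x)) again belongs to A. Suppose ω : A → ℂ is a linear functional satisfying ω(conj Ψ) = conj(ω(Ψ)), ω((conj Ψ)·Ψ) ≥ 0 for every Ψ ∈ A, and ω(1) = 1. Then for every real-valued Ψ ∈ A the number ω(Ψ) is real and satisfies |ω(Ψ)| ≤ sup_{x∈X}|Ψ(x)|. -/

import Mathlib

open scoped ComplexOrder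

/-- **Key estimate inside Lemma 3.1.** Under the same hypotheses as the abstract form of
Lemma 3.1 (a unital conjugation-closed subalgebra `A` of bounded functions `X → ℂ`, closed
under `Φ ↦ √(c − Φ)` for real-valued `Φ ∈ A` and `c > sup |Φ|`, and a normalized positive
`*`-invariant linear functional `ω` on `A`), for every real-valued `Ψ ∈ A` the number
`ω Ψ` is real and `|ω Ψ| ≤ sup_x |Ψ x|`. -/
theorem uniqLQG.state_real_valued_estimate
    {X : Type*} [Nonempty X] (A : Subalgebra ℂ (X → ℂ))
    (hbdd : ∀ Ψ ∈ A, ∃ C : ℝ, ∀ x : X, ‖Ψ x‖ ≤ C)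
    (hconj : ∀ Ψ ∈ A, (fun x => (starRingEnd ℂ) (Ψ x)) ∈ A)
    (hsqrt : ∀ Φ ∈ A, (∀ x : X, (Φ x).im = 0) →
      ∀ c : ℝ, (⨆ x : X, ‖Φ x‖) < c →
        (fun x => (Real.sqrt (c - (Φ x).re) : ℂ)) ∈ A)
    (ω : (X → ℂ) → ℂ)
    (hlin : ∀ α : ℂ, ∀ Ψ ∈ A, ∀ Ψ' ∈ A, ω (α • Ψ + Ψ') = α * ω Ψ + ω Ψ')
    (hstar : ∀ Ψ ∈ A, ω (fun x => (starRingEnd ℂ) (Ψ x)) = (starRingEnd ℂ) (ω Ψ))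
    (hpos : ∀ Ψ ∈ A, 0 ≤ ω (fun x => (starRingEnd ℂ) (Ψ x) * Ψ x))
    (hone : ω 1 = 1) :
    ∀ Ψ ∈ A, (∀ x : X, (Ψ x).im = 0) →
      (ω Ψ).im = 0 ∧ ‖ω Ψ‖ ≤ ⨆ x : X, ‖Ψ x‖ := by
  have hω0 : ω 0 = 0 := by
    have h : ω 0 = ω 0 + ω 0 := by
      simpa using hlin 1 0 A.zero_mem 0 A.zero_mem
    exact (left_eq_add.mp h)
  -- Key estimate: for real-valued Φ ∈ A and c > sup |Φ|, (ω Φ).re ≤ c.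
  have key : ∀ Φ, Φ ∈ A → (∀ x, (Φ x).im = 0) →
      ∀ c : ℝ, (⨆ x, ‖Φ x‖) < c → (ω Φ).re ≤ c := by
    intro Φ hΦA hΦr c hc
    obtain ⟨C, hC⟩ := hbdd Φ hΦA
    have hbd : BddAbove (Set.range fun x => ‖Φ x‖) :=
      ⟨C, by rintro _ ⟨x, rfl⟩; exact hC x⟩
    have habs : ∀ x, ‖Φ x‖ < c :=
      fun x => lt_of_le_of_lt (le_ciSup hbd x) hc
    have hge : ∀ x, 0 ≤ c - (Φ x).re := by
      intro x
      have h1 : |(Φ x).re| ≤ ‖Φ x‖ := Complex.abs_re_le_norm _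
      have h2 := (abs_le.mp (h1.trans (habs x).le))
      linarith [h2.1, h2.2]
    set S : X → ℂ := fun x => (Real.sqrt (c - (Φ x).re) : ℂ) with hS
    have hSA : S ∈ A := hsqrt Φ hΦA hΦr c hc
    have hmul : (fun x => (starRingEnd ℂ) (S x) * S x)
        = (-1 : ℂ) • Φ + (c : ℂ) • (1 : X → ℂ) := by
      funext x
      have hΦx : Φ x = ((Φ x).re : ℂ) := by
        rw [Complex.ext_iff]; simp [hΦr x]
      simp only [hS, Complex.conj_ofReal, Pi.add_apply, Pi.smul_apply, Pi.one_apply,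
        smul_eq_mul, mul_one]
      rw [← Complex.ofReal_mul, Real.mul_self_sqrt (hge x), hΦx]
      push_cast
      simp only [Complex.ofReal_re]
      ring
    have hpos' := hpos S hSA
    rw [hmul] at hpos'
    have hval : ω ((-1 : ℂ) • Φ + (c : ℂ) • (1 : X → ℂ)) = -(ω Φ) + c := by
      rw [hlin (-1) Φ hΦA ((c : ℂ) • (1 : X → ℂ)) (A.smul_mem A.one_mem _)]
      have h1 : ω ((c : ℂ) • (1 : X → ℂ)) = c := by
        simpa [hω0, hone] using hlin (c : ℂ) 1 A.one_mem 0 A.zero_mem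
      rw [h1]; ring
    rw [hval, Complex.le_def] at hpos'
    have h2 := hpos'.1
    simp [Complex.add_re, Complex.neg_re] at h2
    linarith
  intro Ψ hΨ hreal
  have hconjΨ : (fun x => (starRingEnd ℂ) (Ψ x)) = Ψ := by
    funext x; exact Complex.conj_eq_iff_im.mpr (hreal x)
  have him : (ω Ψ).im = 0 := by
    have h := hstar Ψ hΨ
    rw [hconjΨ] at h
    exact Complex.conj_eq_iff_im.mp h.symm
  refine ⟨him, ?_⟩
  have habsre : ‖ω Ψ‖ = |(ω Ψ).re| := by
    have : ω Ψ = ((ω Ψ).re : ℂ) := by rw [Complex.ext_iff]; simp [him]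
    conv_lhs => rw [this]
    exact Complex.norm_real _
  have hnegA : (-Ψ) ∈ A := A.neg_mem hΨ
  have hnegreal : ∀ x, ((-Ψ) x).im = 0 := by intro x; simp [hreal x]
  have hsupneg : (⨆ x, ‖(-Ψ) x‖) = ⨆ x, ‖Ψ x‖ := by
    congr 1; funext x; simp
  have hωneg : ω (-Ψ) = -(ω Ψ) := by
    simpa [hω0] using hlin (-1) Ψ hΨ 0 A.zero_mem
  set M : ℝ := ⨆ x, ‖Ψ x‖ with hM
  have hle : ∀ c : ℝ, M < c → |(ω Ψ).re| ≤ c := by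
    intro c hc
    refine abs_le.mpr ⟨?_, key Ψ hΨ hreal c hc⟩
    have h := key (-Ψ) hnegA hnegreal c (by rw [hsupneg]; exact hc)
    rw [hωneg] at h
    simp only [Complex.neg_re] at h
    linarith
  rw [habsre]
  by_contra hcon
  push_neg at hcon
  have := hle ((M + |(ω Ψ).re|) / 2) (by linarith)
  linarith
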